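/- There exists a compact metric space Y and a continuous map g : Y → Y such that the induced hyperspace map ḡ on K(Y) is topologically mixing and has a dense set of periodic points (hence is Devaney chaotic), while g itself is not Devaney chaotic because its periodic points are not dense in Y. -/

import Mathlib

open TopologicalSpace

/-- The induced map on the hyperspace of nonempty compact subsets. -/
def barMap {X : Type*} [TopologicalSpace X] (f : X → X) (hf : Continuous f) :
    NonemptyCompacts X → NonemptyCompacts X :=
  fun A => ⟨⟨f '' A, A.isCompact.image hf⟩, A.nonempty.image f⟩

/-- Topological transitivity. -/
def IsTransitive {X : Type*} [TopologicalSpace X] (f : X → X) : Prop :=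
  ∀ U V : Set X, IsOpen U → IsOpen V → U.Nonempty → V.Nonempty →
    ∃ n : ℕ, (f^[n] '' U ∩ V).Nonempty

/-- Topological mixing. -/
def IsMixing {X : Type*} [TopologicalSpace X] (f : X → X) : Prop :=
  ∀ U V : Set X, IsOpen U → IsOpen V → U.Nonempty → V.Nonempty →
    ∃ N : ℕ, ∀ n ≥ N, (f^[n] '' U ∩ V).Nonempty

/-- Weak mixing: `f × f` is transitive. -/
def IsWeaklyMixing {X : Type*} [TopologicalSpace X] (f : X → X) : Prop :=
  IsTransitive (fun p : X × X => (f p.1, f p.2))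

/-- The set of periodic points. -/
def Periodics {X : Type*} (f : X → X) : Set X := {x | ∃ n ≥ 1, f^[n] x = x}


noncomputable section HyperExample
open Metric Set Function

local instance instPB : MetricSpace (ℕ → Bool) :=
  PiNat.metricSpaceOfDiscreteUniformity fun _ => rfl

abbrev Circ : Type := AddCircle (1 : ℝ)
abbrev YY : Type := (ℕ → Bool) × Circ

/-- coercion ℝ → Circ as an AddMonoidHom -/
def cR : ℝ →+ Circ := QuotientAddGroup.mk' (AddSubgroup.zmultiples (1:ℝ))

def cntN (b : Bool) : ℕ := if b then 1 else 0

def Sn (x : ℕ → Bool) (n : ℕ) : ℕ := ∑ i ∈ Finset.range n, cntN (x i)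

def sq2 : ℝ := Real.sqrt 2
def sq3 : ℝ := Real.sqrt 3

def gE : YY → YY := fun p =>
  (fun n => p.1 (n + 1), p.2 + cR (sq2 + sq3 * (cntN (p.1 0) : ℝ)))

lemma gE_cont : Continuous gE := by
  apply Continuous.prodMk
  · exact continuous_pi fun n => (continuous_apply (n+1)).comp continuous_fst
  · exact continuous_snd.add
      ((continuous_of_discreteTopology (f := fun b : Bool => cR (sq2 + sq3 * (cntN b : ℝ)))).comp
        ((continuous_apply 0).comp continuous_fst))

lemma gE_iter (n : ℕ) (x : ℕ → Bool) (t : Circ) :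
    gE^[n] (x, t) = (fun i => x (i + n), t + cR ((n : ℝ) * sq2 + sq3 * (Sn x n : ℝ))) := by
  induction n generalizing x t with
  | zero => simp [Sn]
  | succ n ih =>
    rw [Function.iterate_succ_apply]
    show gE^[n] (fun i => x (i+1), t + cR (sq2 + sq3 * (cntN (x 0) : ℝ))) = _
    rw [ih]
    refine Prod.ext ?_ ?_
    · funext i; exact congrArg x (Nat.add_assoc i n 1)
    · show t + cR (sq2 + sq3 * (cntN (x 0) : ℝ)) + cR (_ * sq2 + sq3 * _) = _
      rw [add_assoc, ← map_add]
      have hS : Sn x (n+1) = Sn (fun i => x (i+1)) n + cntN (x 0) := by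
        simpa [Sn] using (Finset.sum_range_succ' (fun i => cntN (x i)) n)
      refine congrArg (t + cR ·) ?_
      rw [hS]; push_cast; ring

/-! ### glue construction -/

def glue (x : ℕ → Bool) (m j n : ℕ) (w : ℕ → Bool) : ℕ → Bool := fun i =>
  if i < m + 1 then x i else if i < m + 1 + j then true else if i < n then false else w (i - n)

lemma glue_below {x m j n w} {i : ℕ} (h : i < m + 1) : glue x m j n w i = x i := by
  simp [glue, h]

lemma glue_shift {x m j n w} (h : m + 1 + j ≤ n) :
    (fun i => glue x m j n w (i + n)) = w := by
  funext i
  have h1 : ¬ (i + n < m + 1) := by omega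
  have h2 : ¬ (i + n < m + 1 + j) := by omega
  have h3 : ¬ (i + n < n) := by omega
  simp [glue, h1, h2, h3]

lemma Sn_glue {x m j n w} (h : m + 1 + j ≤ n) :
    Sn (glue x m j n w) n = Sn x (m+1) + j := by
  have h1 : m + 1 ≤ m + 1 + j := by omega
  unfold Sn
  rw [Finset.range_eq_Ico, ← Finset.sum_Ico_consecutive _ (Nat.zero_le (m+1)) (h1.trans h),
    ← Finset.sum_Ico_consecutive _ h1 h]
  have e1 : ∑ i ∈ Finset.Ico 0 (m+1), cntN (glue x m j n w i)
      = ∑ i ∈ Finset.Ico 0 (m+1), cntN (x i) := by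
    apply Finset.sum_congr rfl
    intro i hi
    rw [glue_below (by simpa using (Finset.mem_Ico.mp hi).2)]
  have e2 : ∑ i ∈ Finset.Ico (m+1) (m+1+j), cntN (glue x m j n w i)
      = ∑ _i ∈ Finset.Ico (m+1) (m+1+j), 1 := by
    apply Finset.sum_congr rfl
    intro i hi
    obtain ⟨hi1, hi2⟩ := Finset.mem_Ico.mp hi
    have h1' : ¬ (i < m + 1) := by omega
    simp [glue, h1', hi2, cntN]
  have e3 : ∑ i ∈ Finset.Ico (m+1+j) n, cntN (glue x m j n w i)
      = 0 := by
    apply Finset.sum_eq_zero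
    intro i hi
    obtain ⟨hi1, hi2⟩ := Finset.mem_Ico.mp hi
    have h1' : ¬ (i < m + 1) := by omega
    have h2' : ¬ (i < m + 1 + j) := by omega
    simp [glue, h1', h2', hi2, cntN]
  rw [e1, e2, e3, Finset.sum_const, Nat.card_Ico]
  have hj : m + 1 + j - (m + 1) = j := by omega
  rw [hj]; simp

/-! ### irrationality facts -/

lemma sq2_pos : 0 < sq2 := Real.sqrt_pos.mpr (by norm_num)
lemma sq3_pos : 0 < sq3 := Real.sqrt_pos.mpr (by norm_num)
lemma sq2_sq : sq2 ^ 2 = 2 := Real.sq_sqrt (by norm_num)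
lemma sq3_sq : sq3 ^ 2 = 3 := Real.sq_sqrt (by norm_num)

lemma sq3_irr : Irrational sq3 := by
  have := (Nat.prime_three).irrational_sqrt
  simpa [sq3] using this

lemma key_irr (n k : ℕ) (hn : 1 ≤ n) (m : ℤ) :
    (n : ℝ) * sq2 + (k : ℝ) * sq3 ≠ (m : ℝ) := by
  intro h
  by_cases hm : m = 0
  · subst hm
    have h1 : 0 < (n : ℝ) * sq2 := mul_pos (by exact_mod_cast hn) sq2_pos
    have h2 : 0 ≤ (k : ℝ) * sq3 := mul_nonneg (by positivity) sq3_pos.le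
    simp only [Int.cast_zero] at h
    linarith
  · have hmn : (2 * m * (n:ℤ)) ≠ 0 := by
      apply mul_ne_zero (mul_ne_zero two_ne_zero hm)
      exact_mod_cast Nat.one_le_iff_ne_zero.mp hn
    have hIrr : Irrational ((2 * (m:ℝ) * (n:ℝ)) * sq2) := by
      have := irrational_sqrt_two.intCast_mul hmn
      push_cast at this
      exact this
    apply hIrr.ne_int (m^2 + 2*n^2 - 3*k^2)
    push_cast
    linear_combination (-((n:ℝ)*sq2) + (k:ℝ)*sq3 + (m:ℝ)) * h
      + (n:ℝ)^2 * sq2_sq - (k:ℝ)^2 * sq3_sq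

/-! ### density of natural multiples of √3 on the circle -/

lemma cR_int_eq_zero (z : ℤ) : cR (z : ℝ) = 0 := by
  rw [show ((z:ℝ)) = z • (1:ℝ) by simp]
  exact (AddCircle.coe_eq_zero_iff (1:ℝ)).mpr ⟨z, rfl⟩

lemma norm_cR_le (r : ℝ) : ‖cR r‖ ≤ |r| := by
  have := QuotientAddGroup.norm_mk_le_norm (S := AddSubgroup.zmultiples (1:ℝ)) (m := r)
  rw [Real.norm_eq_abs] at this
  exact this

lemma nsmul_sq3_ne_zero (n : ℕ) (hn : 1 ≤ n) : n • cR sq3 ≠ 0 := by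
  intro hcontra
  rw [← map_nsmul, nsmul_eq_mul] at hcontra
  obtain ⟨z, hz⟩ := (AddCircle.coe_eq_zero_iff (1:ℝ)).mp hcontra
  simp only [zsmul_eq_mul, mul_one] at hz
  have hIrr : Irrational ((n:ℝ) * sq3) := by
    have := sq3_irr.intCast_mul (m := (n:ℤ)) (by exact_mod_cast Nat.one_le_iff_ne_zero.mp hn)
    push_cast at this
    exact this
  exact hIrr.ne_int z hz.symm

lemma exists_small_step {ε : ℝ} (hε : 0 < ε) :
    ∃ n : ℕ, 1 ≤ n ∧ 0 < ‖n • cR sq3‖ ∧ ‖n • cR sq3‖ < ε := by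
  have hcpt : IsCompact (Set.univ : Set Circ) := isCompact_univ
  obtain ⟨a, -, φ, hφ, hconv⟩ :=
    hcpt.tendsto_subseq (x := fun k : ℕ => k • cR sq3) (fun n => mem_univ _)
  have hcs : CauchySeq (fun k => φ k • cR sq3) := hconv.cauchySeq
  obtain ⟨K, hK⟩ := Metric.cauchySeq_iff'.mp hcs ε hε
  have hlt : φ K < φ (K + 1) := hφ (Nat.lt_succ_self K)
  refine ⟨φ (K+1) - φ K, by omega, ?_, ?_⟩
  · rw [norm_pos_iff]
    exact nsmul_sq3_ne_zero _ (by omega)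
  · have hsub : (φ (K+1) - φ K) • cR sq3 = φ (K+1) • cR sq3 - φ K • cR sq3 :=
      sub_nsmul _ hlt.le
    rw [hsub, ← dist_eq_norm]
    exact hK (K+1) (by omega)

lemma step_dense {r : ℝ} (h0 : 0 < r) (c : Circ) :
    ∃ k : ℕ, k ≤ ⌈1/r⌉₊ + 1 ∧ dist ((k : ℕ) • cR r) c ≤ r := by
  obtain ⟨c', rfl⟩ : ∃ c', cR c' = c := QuotientAddGroup.mk'_surjective (AddSubgroup.zmultiples (1:ℝ)) c
  set c'' : ℝ := Int.fract c' with hc''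
  have hcc : cR c'' = cR c' := by
    have : cR c' - cR c'' = cR (c' - c'') := (map_sub cR c' c'').symm
    have h2 : cR (c' - c'') = 0 := by
      rw [hc'', Int.self_sub_fract]
      exact cR_int_eq_zero _
    have := sub_eq_zero.mp (this ▸ h2)
    exact this.symm
  have h0' : (0:ℝ) ≤ c'' := Int.fract_nonneg c'
  have h1' : c'' < 1 := Int.fract_lt_one c'
  set k : ℕ := ⌈c''/r⌉₊ with hk
  refine ⟨k, ?_, ?_⟩
  · have h2 : c''/r ≤ 1/r := (div_le_div_iff_of_pos_right h0).mpr h1'.le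
    exact (Nat.ceil_le_ceil h2).trans (Nat.le_succ _)
  · have hlow : c'' ≤ (k:ℝ) * r := by
      have := Nat.le_ceil (c''/r)
      rw [← hk] at this
      exact (div_le_iff₀ h0).mp this
    have hhigh : (k:ℝ) * r ≤ c'' + r := by
      have := Nat.ceil_lt_add_one (div_nonneg h0' h0.le)
      rw [← hk] at this
      have h3 : ((k:ℝ) - 1) < c''/r := by linarith
      have h4 := (lt_div_iff₀ h0).mp h3
      nlinarith [h4]
    have : dist ((k : ℕ) • cR r) (cR c') = ‖cR ((k:ℝ) * r - c'')‖ := by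
      rw [← hcc, ← map_nsmul, nsmul_eq_mul, dist_eq_norm, ← map_sub]
    rw [this]
    refine (norm_cR_le _).trans ?_
    rw [abs_le]
    constructor <;> linarith

lemma circle_dense {ε : ℝ} (hε : 0 < ε) :
    ∃ L : ℕ, ∀ c : Circ, ∃ j : ℕ, j ≤ L ∧ dist (j • cR sq3) c < ε := by
  obtain ⟨n, hn1, hpos, hlt⟩ := exists_small_step hε
  set γ : Circ := n • cR sq3 with hγdef
  set r0 : ℝ := (n:ℝ) * sq3 - round ((n:ℝ) * sq3) with hr0
  have hγ : cR r0 = γ := by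
    rw [hr0, map_sub, hγdef, ← map_nsmul, nsmul_eq_mul, cR_int_eq_zero, sub_zero]
  have habs : |r0| = ‖γ‖ := by
    have h := AddCircle.norm_eq (p := (1:ℝ)) (x := (n:ℝ) * sq3)
    simp only [inv_one, one_mul, mul_one] at h
    have hγ2 : γ = cR ((n:ℝ) * sq3) := by rw [hγdef, ← map_nsmul, nsmul_eq_mul]
    rw [hγ2, hr0]
    exact h.symm
  have hr0ne : r0 ≠ 0 := by
    intro h
    rw [h, abs_zero] at habs
    exact hpos.ne habs
  rcases hr0ne.lt_or_gt with hneg | hposr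
  · -- r0 < 0 : use -r0 and -c
    refine ⟨(⌈1/(-r0)⌉₊ + 1) * n, fun c => ?_⟩
    obtain ⟨k, hk, hdist⟩ := step_dense (r := -r0) (by linarith) (-c)
    refine ⟨k * n, Nat.mul_le_mul_right n hk, ?_⟩
    have h1 : (k * n) • cR sq3 = k • γ := by
      rw [hγdef, mul_comm, mul_nsmul]
    have h2 : cR (-r0) = -γ := by rw [map_neg, hγ]
    have h3 : dist (k • γ) c = dist (k • cR (-r0)) (-c) := by
      rw [h2, smul_neg, dist_eq_norm, dist_eq_norm]
      rw [show -(k • γ) - -c = -(k • γ - c) by abel, norm_neg]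
    rw [h1, h3]
    calc dist (k • cR (-r0)) (-c) ≤ -r0 := hdist
      _ = |r0| := (abs_of_neg hneg).symm
      _ = ‖γ‖ := habs
      _ < ε := hlt
  · refine ⟨(⌈1/r0⌉₊ + 1) * n, fun c => ?_⟩
    obtain ⟨k, hk, hdist⟩ := step_dense (r := r0) hposr c
    refine ⟨k * n, Nat.mul_le_mul_right n hk, ?_⟩
    have h1 : (k * n) • cR sq3 = k • γ := by
      rw [hγdef, mul_comm, mul_nsmul]
    rw [h1, ← hγ]
    calc dist (k • cR r0) c ≤ r0 := hdist
      _ = |r0| := (abs_of_pos hposr).symm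
      _ = ‖γ‖ := habs
      _ < ε := hlt

/-! ### mixing of gE -/

lemma dist_le_of_agree {y x : ℕ → Bool} {m : ℕ} (h : ∀ i < m, y i = x i) :
    dist y x ≤ (1/2:ℝ)^m :=
  PiNat.mem_cylinder_iff_dist_le.mp (PiNat.mem_cylinder_iff.mpr h)

lemma mixing_gE : IsMixing gE := by
  intro U V hU hV hUne hVne
  obtain ⟨⟨x, t⟩, hxt⟩ := hUne
  obtain ⟨⟨x', t'⟩, hx't'⟩ := hVne
  obtain ⟨r, hr, hrU⟩ := Metric.isOpen_iff.mp hU _ hxt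
  obtain ⟨r', hr', hrV⟩ := Metric.isOpen_iff.mp hV _ hx't'
  obtain ⟨m, hm⟩ := exists_pow_lt_of_lt_one hr (by norm_num : (1/2:ℝ) < 1)
  obtain ⟨L, hL⟩ := circle_dense hr'
  refine ⟨m + 1 + L, fun n hn => ?_⟩
  obtain ⟨j, hjL, hj⟩ := hL (t' - (t + cR ((n:ℝ) * sq2 + sq3 * (Sn x (m+1) : ℝ))))
  have hjn : m + 1 + j ≤ n := by omega
  set y : ℕ → Bool := glue x m j n x' with hy
  have hyU : (y, t) ∈ U := by
    apply hrU
    rw [mem_ball, Prod.dist_eq]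
    apply max_lt
    · refine lt_of_le_of_lt (dist_le_of_agree (m := m+1) fun i hi => glue_below hi) ?_
      calc ((1:ℝ)/2)^(m+1) ≤ (1/2)^m := by
            apply pow_le_pow_of_le_one (by norm_num) (by norm_num) (Nat.le_succ m)
        _ < r := hm
    · simpa using hr
  have hgn : gE^[n] (y, t) ∈ V := by
    apply hrV
    rw [gE_iter, mem_ball, Prod.dist_eq]
    apply max_lt
    · rw [hy, glue_shift hjn]
      simpa using hr'
    · rw [hy, Sn_glue hjn]
      set a : Circ := t + cR ((n:ℝ) * sq2 + sq3 * (Sn x (m+1) : ℝ)) with ha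
      have harith : t + cR ((n:ℝ) * sq2 + sq3 * ((Sn x (m+1) + j : ℕ) : ℝ))
          = a + j • cR sq3 := by
        have h1 : (j • cR sq3 : Circ) = cR (sq3 * (j:ℝ)) := by
          rw [← map_nsmul]
          congr 1
          rw [nsmul_eq_mul]; ring
        rw [h1, ha, add_assoc, ← map_add]
        refine congrArg (fun z => t + cR z) ?_
        push_cast
        ring
      rw [harith, show t' = a + (t' - a) by abel, dist_add_left]
      exact hj
  exact ⟨gE^[n] (y, t), ⟨(y, t), hyU, rfl⟩, hgn⟩

/-! ### hyperspace: iterate of barMap -/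

lemma barMap_iter_coe {X : Type*} [TopologicalSpace X] (f : X → X) (hf : Continuous f)
    (n : ℕ) (A : NonemptyCompacts X) :
    (((barMap f hf)^[n] A : NonemptyCompacts X) : Set X) = f^[n] '' (A : Set X) := by
  induction n with
  | zero => simp
  | succ n ih =>
    rw [Function.iterate_succ_apply']
    show f '' (((barMap f hf)^[n] A : NonemptyCompacts X) : Set X) = _
    rw [ih, ← Set.image_comp, ← Function.iterate_succ']

/-! ### Banks: mixing lifts to the hyperspace -/

lemma hyperMix {X : Type} [MetricSpace X] {f : X → X} (hf : Continuous f)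
    (hmix : IsMixing f) : IsMixing (barMap f hf) := by
  intro U V hU hV hUne hVne
  obtain ⟨A, hA⟩ := hUne
  obtain ⟨B, hB⟩ := hVne
  obtain ⟨r, hr, hrU⟩ := Metric.isOpen_iff.mp hU _ hA
  obtain ⟨r', hr', hrV⟩ := Metric.isOpen_iff.mp hV _ hB
  set ε : ℝ := min r r' / 3 with hε
  have hεpos : 0 < ε := by positivity
  obtain ⟨tA, htAsub, htAfin, htAcov⟩ := A.isCompact.finite_cover_balls (e := ε) hεpos
  obtain ⟨tB, htBsub, htBfin, htBcov⟩ := B.isCompact.finite_cover_balls (e := ε) hεpos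
  -- nonempty nets
  obtain ⟨a0, ha0A⟩ := A.nonempty
  obtain ⟨a1, ha1, ha0ball⟩ : ∃ a ∈ tA, a0 ∈ ball a ε := by
    have := htAcov ha0A; simpa using this
  obtain ⟨b0, hb0B⟩ := B.nonempty
  obtain ⟨b1, hb1, hb0ball⟩ : ∃ b ∈ tB, b0 ∈ ball b ε := by
    have := htBcov hb0B; simpa using this
  -- choose mixing times
  have HN : ∀ a b : X, ∃ N : ℕ, (a ∈ tA ∧ b ∈ tB) →
      ∀ n ≥ N, ((f^[n] '' ball a ε) ∩ ball b ε).Nonempty := by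
    intro a b
    by_cases hmem : a ∈ tA ∧ b ∈ tB
    · obtain ⟨N, hN⟩ := hmix (ball a ε) (ball b ε) isOpen_ball isOpen_ball
        ⟨a, mem_ball_self hεpos⟩ ⟨b, mem_ball_self hεpos⟩
      exact ⟨N, fun _ => hN⟩
    · exact ⟨0, fun h => absurd h hmem⟩
  choose Nf hNf using HN
  set Nmax : ℕ := htAfin.toFinset.sup (fun a => htBfin.toFinset.sup (fun b => Nf a b)) with hNmax
  refine ⟨Nmax, fun n hn => ?_⟩
  -- choose points
  have HC : ∀ a b : X, ∃ u : X, (a ∈ tA ∧ b ∈ tB) →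
      (dist u a < ε ∧ dist (f^[n] u) b < ε) := by
    intro a b
    by_cases hmem : a ∈ tA ∧ b ∈ tB
    · have hNab : n ≥ Nf a b := by
        refine le_trans ?_ hn
        rw [hNmax]
        refine le_trans (Finset.le_sup (f := fun b => Nf a b) (htBfin.mem_toFinset.mpr hmem.2)) ?_
        exact Finset.le_sup (f := fun a => htBfin.toFinset.sup fun b => Nf a b)
          (htAfin.mem_toFinset.mpr hmem.1)
      obtain ⟨v, ⟨u, hu, rfl⟩, hv⟩ := hNf a b hmem n hNab
      exact ⟨u, fun _ => ⟨mem_ball.mp hu, mem_ball.mp hv⟩⟩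
    · exact ⟨a0, fun h => absurd h hmem⟩
  choose cp hcp using HC
  set C : Set X := Set.image2 cp tA tB with hC
  have hCfin : C.Finite := Set.Finite.image2 _ htAfin htBfin
  have hCne : C.Nonempty := ⟨cp a1 b1, Set.mem_image2_of_mem ha1 hb1⟩
  set P : NonemptyCompacts X := ⟨⟨C, hCfin.isCompact⟩, hCne⟩ with hP
  have hdPA : dist P A < r := by
    have h2ε : Metric.hausdorffDist C (A : Set X) ≤ 2 * ε := by
      apply Metric.hausdorffDist_le_of_mem_dist (by positivity)
      · rintro p ⟨a, ha, b, hb, rfl⟩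
        exact ⟨a, htAsub ha, ((hcp a b ⟨ha, hb⟩).1).le.trans (by linarith)⟩
      · intro p hp
        obtain ⟨a, ha, hpball⟩ : ∃ a ∈ tA, p ∈ ball a ε := by
          have := htAcov hp; simpa using this
        refine ⟨cp a b1, Set.mem_image2_of_mem ha hb1, ?_⟩
        have h1 := mem_ball.mp hpball
        have h2 := (hcp a b1 ⟨ha, hb1⟩).1
        calc dist p (cp a b1) ≤ dist p a + dist (cp a b1) a := dist_triangle_right _ _ _
          _ ≤ 2 * ε := by linarith
    calc dist P A = Metric.hausdorffDist (C : Set X) (A : Set X) := NonemptyCompacts.dist_eq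
      _ ≤ 2 * ε := h2ε
      _ < r := by
          have : min r r' ≤ r := min_le_left _ _
          rw [hε]; linarith [lt_min_iff.mpr ⟨hr, hr'⟩]
  have hPU : P ∈ U := hrU (mem_ball.mpr hdPA)
  have hcoe : (((barMap f hf)^[n] P : NonemptyCompacts X) : Set X) = f^[n] '' C :=
    barMap_iter_coe f hf n P
  have hdPB : dist ((barMap f hf)^[n] P) B < r' := by
    have h2ε : Metric.hausdorffDist (f^[n] '' C) (B : Set X) ≤ 2 * ε := by
      apply Metric.hausdorffDist_le_of_mem_dist (by positivity)
      · rintro q ⟨p, ⟨a, ha, b, hb, rfl⟩, rfl⟩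
        exact ⟨b, htBsub hb, ((hcp a b ⟨ha, hb⟩).2).le.trans (by linarith)⟩
      · intro q hq
        obtain ⟨b, hb, hqball⟩ : ∃ b ∈ tB, q ∈ ball b ε := by
          have := htBcov hq; simpa using this
        refine ⟨f^[n] (cp a1 b), ⟨cp a1 b, Set.mem_image2_of_mem ha1 hb, rfl⟩, ?_⟩
        have h1 := mem_ball.mp hqball
        have h2 := (hcp a1 b ⟨ha1, hb⟩).2
        calc dist q (f^[n] (cp a1 b)) ≤ dist q b + dist (f^[n] (cp a1 b)) b :=
              dist_triangle_right _ _ _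
          _ ≤ 2 * ε := by linarith
    calc dist ((barMap f hf)^[n] P) B
        = Metric.hausdorffDist (((barMap f hf)^[n] P : NonemptyCompacts X) : Set X) (B : Set X) :=
          NonemptyCompacts.dist_eq
      _ = Metric.hausdorffDist (f^[n] '' C) (B : Set X) := by rw [hcoe]
      _ ≤ 2 * ε := h2ε
      _ < r' := by
          have : min r r' ≤ r' := min_le_right _ _
          rw [hε]; linarith [lt_min_iff.mpr ⟨hr, hr'⟩]
  exact ⟨(barMap f hf)^[n] P, ⟨P, hPU, rfl⟩, hrV (mem_ball.mpr hdPB)⟩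

/-! ### periodic compact sets for gE -/

def Dset (x : ℕ → Bool) (m N : ℕ) : Set (ℕ → Bool) :=
  {y | ∀ k i : ℕ, i ≤ m → y (k * N + i) = x i}

lemma Dset_closed (x : ℕ → Bool) (m N : ℕ) : IsClosed (Dset x m N) := by
  have : Dset x m N = ⋂ (k : ℕ) (i : ℕ) (_ : i ≤ m), {y : ℕ → Bool | y (k*N+i) = x i} := by
    ext y; simp [Dset]
  rw [this]
  exact isClosed_iInter fun k => isClosed_iInter fun i => isClosed_iInter fun _ =>
    isClosed_eq (continuous_apply _) continuous_const

lemma per_near (x : ℕ → Bool) (t : Circ) {ε : ℝ} (hε : 0 < ε) :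
    ∃ (Λ : Set YY) (N : ℕ), 1 ≤ N ∧ Λ.Nonempty ∧ IsCompact Λ ∧ gE^[N] '' Λ = Λ ∧
      ∀ p ∈ Λ, dist p (x, t) ≤ ε := by
  obtain ⟨m, hm⟩ := exists_pow_lt_of_lt_one hε (by norm_num : (1/2:ℝ) < 1)
  obtain ⟨L, hL⟩ := circle_dense (by positivity : (0:ℝ) < ε/2)
  set N := m + 1 + L with hN
  set K₀ : Set YY := (Dset x m N) ×ˢ (closedBall t (ε/2)) with hK₀
  have hK₀closed : IsClosed K₀ := (Dset_closed x m N).prod Metric.isClosed_closedBall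
  -- the preimage step
  have Pre : ∀ q ∈ K₀, ∃ p ∈ K₀, gE^[N] p = q := by
    rintro ⟨y, s⟩ ⟨hy, hs⟩
    set a : Circ := cR ((N:ℝ) * sq2 + sq3 * (Sn x (m+1) : ℝ)) with ha
    obtain ⟨j, hjL, hj⟩ := hL (s - t - a)
    have hjn : m + 1 + j ≤ N := by omega
    set s' : Circ := s - cR ((N:ℝ) * sq2 + sq3 * ((Sn x (m+1) + j : ℕ) : ℝ)) with hs'
    refine ⟨(glue x m j N y, s'), ⟨?_, ?_⟩, ?_⟩
    · -- glue ∈ Dset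
      intro k i hi
      cases k with
      | zero => simpa using glue_below (by omega : (0 * N + i) < m + 1)
      | succ k' =>
        show glue x m j N y ((k'+1) * N + i) = x i
        have hAB : (k'+1) * N = k' * N + N := by ring
        rw [hAB]
        set B := k' * N with hB
        have h1 : ¬ (B + N + i < m + 1) := by omega
        have h2 : ¬ (B + N + i < m + 1 + j) := by omega
        have h3 : ¬ (B + N + i < N) := by omega
        have h4 : B + N + i - N = B + i := by omega
        simp only [glue, if_neg h1, if_neg h2, if_neg h3, h4]
        exact hy k' i hi
    · -- s' ∈ closedBall t (ε/2)
      rw [mem_closedBall]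
      have h1 : (j • cR sq3 : Circ) = cR (sq3 * (j:ℝ)) := by
        rw [← map_nsmul]; congr 1; rw [nsmul_eq_mul]; ring
      have hcRsplit : cR ((N:ℝ) * sq2 + sq3 * ((Sn x (m+1) + j : ℕ) : ℝ))
          = a + cR (sq3 * (j:ℝ)) := by
        rw [ha, ← map_add]
        refine congrArg cR ?_
        push_cast; ring
      have hdist : dist s' t = dist (j • cR sq3) (s - t - a) := by
        rw [dist_eq_norm, dist_eq_norm, hs', hcRsplit, h1]
        rw [show s - (a + cR (sq3 * (j:ℝ))) - t = -(cR (sq3 * (j:ℝ)) - (s - t - a)) by abel,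
          norm_neg]
      rw [hdist]
      exact hj.le
    · -- gE^[N] p = q
      rw [gE_iter]
      refine Prod.ext ?_ ?_
      · show (fun i => glue x m j N y (i + N)) = y
        exact glue_shift hjn
      · show s' + cR ((N:ℝ) * sq2 + sq3 * (Sn (glue x m j N y) N : ℝ)) = s
        rw [Sn_glue hjn, hs']
        exact sub_add_cancel _ _
  -- base point of K₀
  have hK₀ne : ((fun i => if i % N ≤ m then x (i % N) else false : ℕ → Bool), t) ∈ K₀ := by
    refine ⟨?_, mem_closedBall_self (by positivity)⟩
    intro k i hi
    have h1 : (k * N + i) % N = i := by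
      rw [Nat.mul_comm k N, Nat.mul_add_mod]
      exact Nat.mod_eq_of_lt (by omega)
    show (if (k*N+i) % N ≤ m then x ((k*N+i) % N) else false) = x i
    rw [h1, if_pos hi]
  -- backward chain
  let chain : ℕ → {p : YY // p ∈ K₀} := fun k => Nat.rec ⟨_, hK₀ne⟩
    (fun _ prev => ⟨Classical.choose (Pre prev.1 prev.2),
      (Classical.choose_spec (Pre prev.1 prev.2)).1⟩) k
  have hchain : ∀ k, gE^[N] (chain (k+1)).1 = (chain k).1 := fun k =>
    (Classical.choose_spec (Pre (chain k).1 (chain k).2)).2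
  have hiter : ∀ i k, i ≤ k → gE^[i*N] (chain k).1 = (chain (k - i)).1 := by
    intro i
    induction i with
    | zero => intro k _; simp
    | succ i ih =>
      intro k hik
      obtain ⟨k', rfl⟩ : ∃ k', k = k' + 1 := ⟨k - 1, by omega⟩
      have h1 : (i+1)*N = i*N + N := by ring
      have h2 : k' + 1 - (i+1) = k' - i := by omega
      rw [h1, Function.iterate_add_apply, hchain k', ih k' (by omega), h2]
  -- the maximal invariant set
  set Λ : Set YY := ⋂ i : ℕ, gE^[i*N] ⁻¹' K₀ with hΛ
  have hΛclosed : IsClosed Λ :=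
    isClosed_iInter fun i => hK₀closed.preimage (gE_cont.iterate _)
  have hΛne : Λ.Nonempty := by
    set C : ℕ → Set YY := fun k => ⋂ i ∈ Finset.range (k+1), gE^[i*N] ⁻¹' K₀ with hCdef
    have hCclosed : ∀ k, IsClosed (C k) := fun k =>
      isClosed_biInter fun i _ => hK₀closed.preimage (gE_cont.iterate _)
    have hCne : ∀ k, (C k).Nonempty := by
      intro k
      refine ⟨(chain k).1, ?_⟩
      simp only [hCdef, Set.mem_iInter, Finset.mem_range]
      intro i hi
      rw [Set.mem_preimage, hiter i k (by omega)]
      exact (chain (k-i)).2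
    have hCanti : ∀ k, C (k+1) ⊆ C k := by
      intro k p hp
      simp only [hCdef, Set.mem_iInter, Finset.mem_range] at hp ⊢
      intro i hi
      exact hp i (by omega)
    have hInter := IsCompact.nonempty_iInter_of_sequence_nonempty_isCompact_isClosed C hCanti hCne
      ((hCclosed 0).isCompact) hCclosed
    obtain ⟨p, hp⟩ := hInter
    refine ⟨p, ?_⟩
    simp only [hΛ, Set.mem_iInter]
    intro i
    have := Set.mem_iInter.mp hp i
    simp only [hCdef, Set.mem_iInter, Finset.mem_range] at this
    exact this i (by omega)
  have hΛsubK₀ : Λ ⊆ K₀ := by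
    intro p hp
    have := Set.mem_iInter.mp hp 0
    simpa using this
  have hinv : gE^[N] '' Λ = Λ := by
    apply Set.Subset.antisymm
    · rintro q ⟨p, hp, rfl⟩
      apply Set.mem_iInter.mpr
      intro i
      rw [Set.mem_preimage, ← Function.iterate_add_apply]
      have h1 : i*N + N = (i+1)*N := by ring
      rw [h1]
      exact Set.mem_iInter.mp hp (i+1)
    · intro q hq
      obtain ⟨p, hpK, hpq⟩ := Pre q (hΛsubK₀ hq)
      refine ⟨p, ?_, hpq⟩
      apply Set.mem_iInter.mpr
      intro i
      cases i with
      | zero => simpa using hpK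
      | succ i' =>
        rw [Set.mem_preimage]
        have h1 : (i'+1)*N = i'*N + N := by ring
        rw [h1, Function.iterate_add_apply, hpq]
        exact Set.mem_iInter.mp hq i'
  refine ⟨Λ, N, by omega, hΛne, hΛclosed.isCompact, hinv, ?_⟩
  rintro ⟨y, s⟩ hp
  obtain ⟨hy, hs⟩ := hΛsubK₀ hp
  rw [Prod.dist_eq]
  apply max_le
  · refine (dist_le_of_agree (m := m+1) fun i hi => ?_).trans ?_
    · have := hy 0 i (by omega)
      simpa using this
    · calc ((1:ℝ)/2)^(m+1) ≤ (1/2)^m := by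
            apply pow_le_pow_of_le_one (by norm_num) (by norm_num) (Nat.le_succ m)
        _ ≤ ε := hm.le
  · exact (mem_closedBall.mp hs).trans (by linarith)

lemma inv_iter {Λ : Set YY} {N : ℕ} (h : gE^[N] '' Λ = Λ) (k : ℕ) : gE^[N*k] '' Λ = Λ := by
  induction k with
  | zero => simp
  | succ k ih =>
    have h1 : N*(k+1) = N*k + N := by ring
    rw [h1, Function.iterate_add, Set.image_comp, h, ih]

lemma dense_per_bar : Dense (Periodics (barMap gE gE_cont)) := by
  rw [Metric.dense_iff]
  intro T r hr
  have hδ : 0 < r/3 := by linarith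
  obtain ⟨tT, htTsub, htTfin, htTcov⟩ := T.isCompact.finite_cover_balls (e := r/3) hδ
  obtain ⟨p0, hp0⟩ := T.nonempty
  obtain ⟨z1, hz1, hz1ball⟩ : ∃ z ∈ tT, p0 ∈ ball z (r/3) := by
    have := htTcov hp0; simpa using this
  have H : ∀ z : YY, ∃ ΛN : Set YY × ℕ, 1 ≤ ΛN.2 ∧ ΛN.1.Nonempty ∧ IsCompact ΛN.1 ∧
      gE^[ΛN.2] '' ΛN.1 = ΛN.1 ∧ ∀ p ∈ ΛN.1, dist p z ≤ r/3 := by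
    intro z
    obtain ⟨Λ, N, h1, h2, h3, h4, h5⟩ := per_near z.1 z.2 hδ
    exact ⟨(Λ, N), h1, h2, h3, h4, by simpa using h5⟩
  choose F hF using H
  set M : ℕ := ∏ z ∈ htTfin.toFinset, (F z).2 with hM
  have hM1 : 1 ≤ M := Finset.one_le_prod' fun z _ => (hF z).1
  set P : Set YY := ⋃ z ∈ tT, (F z).1 with hP
  have hPcompact : IsCompact P := htTfin.isCompact_biUnion fun z _ => (hF z).2.2.1
  have hPne : P.Nonempty := by
    obtain ⟨q, hq⟩ := (hF z1).2.1
    exact ⟨q, Set.mem_biUnion hz1 hq⟩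
  have hPinv : gE^[M] '' P = P := by
    rw [hP, Set.image_iUnion₂]
    apply Set.iUnion₂_congr
    intro z hz
    obtain ⟨c, hc⟩ := Finset.dvd_prod_of_mem (fun z => (F z).2) (htTfin.mem_toFinset.mpr hz)
    rw [← hM] at hc
    rw [hc]
    exact inv_iter (hF z).2.2.2.1 c
  set PP : NonemptyCompacts YY := ⟨⟨P, hPcompact⟩, hPne⟩ with hPP
  have hPer : (barMap gE gE_cont)^[M] PP = PP := by
    apply NonemptyCompacts.ext
    rw [barMap_iter_coe]
    exact hPinv
  have hdist : dist PP T < r := by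
    have h2 : Metric.hausdorffDist (P : Set YY) (T : Set YY) ≤ 2*(r/3) := by
      apply Metric.hausdorffDist_le_of_mem_dist (by positivity)
      · intro p hp
        obtain ⟨z, hz, hpz⟩ := Set.mem_iUnion₂.mp hp
        exact ⟨z, htTsub hz, ((hF z).2.2.2.2 p hpz).trans (by linarith)⟩
      · intro q hq
        obtain ⟨z, hz, hqball⟩ : ∃ z ∈ tT, q ∈ ball z (r/3) := by
          have := htTcov hq; simpa using this
        obtain ⟨p, hpΛ⟩ := (hF z).2.1
        refine ⟨p, Set.mem_biUnion hz hpΛ, ?_⟩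
        have h1 := mem_ball.mp hqball
        have h3 := (hF z).2.2.2.2 p hpΛ
        calc dist q p ≤ dist q z + dist p z := dist_triangle_right _ _ _
          _ ≤ 2*(r/3) := by linarith
    calc dist PP T = Metric.hausdorffDist (P : Set YY) (T : Set YY) := NonemptyCompacts.dist_eq
      _ ≤ 2*(r/3) := h2
      _ < r := by linarith
  exact ⟨PP, mem_ball.mpr hdist, ⟨M, hM1, hPer⟩⟩

lemma per_gE_empty : Periodics gE = ∅ := by
  ext p
  simp only [Periodics, Set.mem_setOf_eq, Set.mem_empty_iff_false, iff_false]
  rintro ⟨n, hn, hfix⟩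
  obtain ⟨x, t⟩ := p
  rw [gE_iter] at hfix
  have h2 := congrArg Prod.snd hfix
  simp only at h2
  have h3 : cR ((n:ℝ) * sq2 + sq3 * (Sn x n : ℝ)) = 0 := add_eq_left.mp h2
  obtain ⟨z, hz⟩ := (AddCircle.coe_eq_zero_iff (1:ℝ)).mp h3
  simp only [zsmul_eq_mul, mul_one] at hz
  exact key_irr n (Sn x n) hn z (by rw [mul_comm sq3 _] at hz; linarith [hz]) 

theorem exists_hyper_devaney_base_not' :
    ∃ (Y : Type) (_ : MetricSpace Y) (_ : CompactSpace Y)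
      (g : Y → Y) (hg : Continuous g),
      IsMixing (barMap g hg) ∧ Dense (Periodics (barMap g hg)) ∧
      ¬ Dense (Periodics g) := by
  refine ⟨YY, inferInstance, inferInstance, gE, gE_cont,
    hyperMix gE_cont mixing_gE, dense_per_bar, ?_⟩
  intro hd
  rw [per_gE_empty] at hd
  obtain ⟨q, hq⟩ := hd.nonempty
  exact hq

end HyperExample

/-- There is a compact system whose hyperspace map is mixing with dense periodic
points (hence Devaney chaotic), while the base map has non-dense periodic points
(hence is not Devaney chaotic). -/
theorem exists_hyper_devaney_base_not :
    ∃ (Y : Type) (_ : MetricSpace Y) (_ : CompactSpace Y)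
      (g : Y → Y) (hg : Continuous g),
      IsMixing (barMap g hg) ∧ Dense (Periodics (barMap g hg)) ∧
      ¬ Dense (Periodics g) :=
  exists_hyper_devaney_base_not'
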